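/- Let L₁₀ = [[−1/3,0,−4/3],[0,−1,0],[−2/3,0,1/3]], L₀₁ = [[0,−2/3,0],[−1,0,−1],[0,−1/3,0]], L₀₀ = diag(0,−1,−3), and set V⁰⁰ = Z⁰ = (1,0,0) ∈ ℝ³, A₀₀ = 0. Then there exist unique real numbers A_{mn} and vectors V^{mn} ∈ ℝ³ for all pairs (m,n) with 0 < m+n ≤ 3 satisfying the recursion: A_{mn} = Σ ⟨Z⁰, L_{kl} V^{(m−k)(n−l)}⟩ summed over (k,l) ∈ {(1,0),(0,1)} with (k,l) ≤ (m,n); L₀₀V^{mn} = −Σ_{(k,l)∈{(1,0),(0,1)}, (k,l)≤(m,n)} L_{kl}V^{(m−k)(n−l)} + Σ_{(0,0)<(k,l)≤(m,n)} A_{kl} V^{(m−k)(n−l)}; and ⟨Z⁰, V^{mn}⟩ = 0. Moreover the resulting coefficients are A₁₀ = −1/3, A₀₁ = 0, A₂₀ = 8/27, A₁₁ = 0, A₀₂ = 2/3, A₃₀ = 16/243, A₂₁ = 0, A₁₂ = −20/27, A₀₃ = 0. -/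

import Mathlib

open Matrix

/-- `L₀₀ = diag(0,−1,−3)`. -/
noncomputable def L00 : Matrix (Fin 3) (Fin 3) ℝ := !![0,0,0; 0,-1,0; 0,0,-3]

/-- `L₁₀`. -/
noncomputable def L10 : Matrix (Fin 3) (Fin 3) ℝ := !![-1/3,0,-4/3; 0,-1,0; -2/3,0,1/3]

/-- `L₀₁`. -/
noncomputable def L01 : Matrix (Fin 3) (Fin 3) ℝ := !![0,-2/3,0; -1,0,-1; 0,-1/3,0]

/-- `Z⁰ = (1,0,0)`. -/
noncomputable def Z0 : Fin 3 → ℝ := ![1, 0, 0]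

/-- The recursive system defining the coefficients `A_{mn}` and vectors `V^{mn}` for
`0 < m+n ≤ 3`, starting from `V⁰⁰ = Z⁰ = (1,0,0)` and `A₀₀ = 0`:
`A_{mn} = Σ_{(k,l)∈{(1,0),(0,1)}, (k,l)≤(m,n)} ⟨Z⁰, L_{kl} V^{(m−k)(n−l)}⟩`,
`L₀₀V^{mn} = −Σ_{(k,l)∈{(1,0),(0,1)}, (k,l)≤(m,n)} L_{kl}V^{(m−k)(n−l)}
            + Σ_{(0,0)<(k,l)≤(m,n)} A_{kl} V^{(m−k)(n−l)}`, and `⟨Z⁰, V^{mn}⟩ = 0`. -/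
def RWrecursion (A : ℕ → ℕ → ℝ) (Vv : ℕ → ℕ → Fin 3 → ℝ) : Prop :=
  Vv 0 0 = ![1, 0, 0] ∧ A 0 0 = 0 ∧
  ∀ m n : ℕ, 0 < m + n → m + n ≤ 3 →
    (A m n = (if 1 ≤ m then Z0 ⬝ᵥ L10.mulVec (Vv (m - 1) n) else 0)
             + (if 1 ≤ n then Z0 ⬝ᵥ L01.mulVec (Vv m (n - 1)) else 0)) ∧
    (L00.mulVec (Vv m n) =
      -((if 1 ≤ m then L10.mulVec (Vv (m - 1) n) else 0)
        + (if 1 ≤ n then L01.mulVec (Vv m (n - 1)) else 0))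
      + ∑ k ∈ Finset.range (m + 1), ∑ l ∈ Finset.range (n + 1),
          (if (k, l) ≠ (0, 0) then A k l • Vv (m - k) (n - l) else 0)) ∧
    Z0 ⬝ᵥ Vv m n = 0

/-- There exist unique `A_{mn} ∈ ℝ` and `V^{mn} ∈ ℝ³` for `0 < m+n ≤ 3` satisfying the
recursion, and the resulting coefficients are `A₁₀ = −1/3`, `A₀₁ = 0`, `A₂₀ = 8/27`,
`A₁₁ = 0`, `A₀₂ = 2/3`, `A₃₀ = 16/243`, `A₂₁ = 0`, `A₁₂ = −20/27`, `A₀₃ = 0`. -/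

noncomputable def Asol : ℕ → ℕ → ℝ := fun m n =>
  match m, n with
  | 1, 0 => -1/3 | 2, 0 => 8/27 | 0, 2 => 2/3 | 3, 0 => 16/243 | 1, 2 => -20/27
  | _, _ => 0

noncomputable def Vsol : ℕ → ℕ → Fin 3 → ℝ := fun m n =>
  match m, n with
  | 0, 0 => ![1, 0, 0]
  | 1, 0 => ![0, 0, -2/9]
  | 0, 1 => ![0, -1, 0]
  | 2, 0 => ![0, 0, -4/81]
  | 1, 1 => ![0, 8/9, 0]
  | 0, 2 => ![0, 0, 1/9]
  | 3, 0 => ![0, 0, 8/729]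
  | 2, 1 => ![0, -20/81, 0]
  | 1, 2 => ![0, 0, -2/81]
  | 0, 3 => ![0, 5/9, 0]
  | _, _ => 0

lemma Z0_dot (v : Fin 3 → ℝ) : Z0 ⬝ᵥ v = v 0 := by
  simp [Z0, dotProduct, Fin.sum_univ_three]

lemma L00_cancel (v w : Fin 3 → ℝ) (h : L00.mulVec v = L00.mulVec w)
    (h0 : v 0 = w 0) : v = w := by
  have h1 := congrFun h 1
  have h2 := congrFun h 2
  simp [L00, Matrix.mulVec, dotProduct, Fin.sum_univ_three] at h1 h2
  funext i
  fin_cases i <;> simp_all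

set_option maxHeartbeats 2000000 in
theorem randomWalker_model_coefficients :
    (∃ (A : ℕ → ℕ → ℝ) (Vv : ℕ → ℕ → Fin 3 → ℝ),
      RWrecursion A Vv ∧
      A 1 0 = -1/3 ∧ A 0 1 = 0 ∧ A 2 0 = 8/27 ∧ A 1 1 = 0 ∧ A 0 2 = 2/3 ∧
      A 3 0 = 16/243 ∧ A 2 1 = 0 ∧ A 1 2 = -20/27 ∧ A 0 3 = 0) ∧
    (∀ (A A' : ℕ → ℕ → ℝ) (Vv Vv' : ℕ → ℕ → Fin 3 → ℝ),
      RWrecursion A Vv → RWrecursion A' Vv' →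
      ∀ m n : ℕ, 0 < m + n → m + n ≤ 3 → A m n = A' m n ∧ Vv m n = Vv' m n) := by
  constructor
  · refine ⟨Asol, Vsol, ⟨rfl, rfl, ?_⟩, by norm_num [Asol]⟩
    intro m n h1 h2
    have hm : m ≤ 3 := by omega
    have hn : n ≤ 3 := by omega
    interval_cases m <;> interval_cases n <;> first
    | omega
    | (refine ⟨?_, ?_, ?_⟩
       · norm_num [Asol, Vsol, Z0, L10, L01, Matrix.mulVec, dotProduct,
           Fin.sum_univ_three, Matrix.cons_val_zero, Matrix.cons_val_one, Matrix.cons_val_two]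
       · funext i
         fin_cases i <;>
           norm_num [Finset.sum_range_succ, Prod.mk.injEq, Asol, Vsol, L00, L10, L01,
             Matrix.mulVec, dotProduct, Fin.sum_univ_three, Matrix.vecHead,
             Matrix.vecTail, Function.comp, Matrix.cons_val_zero, Matrix.cons_val_one, Matrix.cons_val_two]
       · norm_num [Vsol, Z0, dotProduct, Fin.sum_univ_three, Matrix.cons_val_two])
  · intro A A' Vv Vv' h h' m n h1 h2
    obtain ⟨hV0, hA0, hr⟩ := h
    obtain ⟨hV0', hA0', hr'⟩ := h'
    have eA00 : A 0 0 = A' 0 0 := by rw [hA0, hA0']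
    have eV00 : Vv 0 0 = Vv' 0 0 := by rw [hV0, hV0']
    obtain ⟨a10, l10, z10⟩ := hr 1 0 (by norm_num) (by norm_num)
    obtain ⟨a10', l10', z10'⟩ := hr' 1 0 (by norm_num) (by norm_num)
    have eA10 : A 1 0 = A' 1 0 := by
      rw [a10, a10']; norm_num [eA00, eV00]
    have eV10 : Vv 1 0 = Vv' 1 0 := by
      refine L00_cancel _ _ ?_ ?_
      · rw [l10, l10']
        norm_num [Finset.sum_range_succ, Prod.mk.injEq, eA00, eV00, eA10]
      · rw [Z0_dot] at z10 z10'; rw [z10, z10']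
    obtain ⟨a01, l01, z01⟩ := hr 0 1 (by norm_num) (by norm_num)
    obtain ⟨a01', l01', z01'⟩ := hr' 0 1 (by norm_num) (by norm_num)
    have eA01 : A 0 1 = A' 0 1 := by
      rw [a01, a01']; norm_num [eA00, eV00, eA10, eV10]
    have eV01 : Vv 0 1 = Vv' 0 1 := by
      refine L00_cancel _ _ ?_ ?_
      · rw [l01, l01']
        norm_num [Finset.sum_range_succ, Prod.mk.injEq, eA00, eV00, eA10, eV10, eA01]
      · rw [Z0_dot] at z01 z01'; rw [z01, z01']
    obtain ⟨a20, l20, z20⟩ := hr 2 0 (by norm_num) (by norm_num)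
    obtain ⟨a20', l20', z20'⟩ := hr' 2 0 (by norm_num) (by norm_num)
    have eA20 : A 2 0 = A' 2 0 := by
      rw [a20, a20']; norm_num [eA00, eV00, eA10, eV10, eA01, eV01]
    have eV20 : Vv 2 0 = Vv' 2 0 := by
      refine L00_cancel _ _ ?_ ?_
      · rw [l20, l20']
        norm_num [Finset.sum_range_succ, Prod.mk.injEq, eA00, eV00, eA10, eV10, eA01, eV01, eA20]
      · rw [Z0_dot] at z20 z20'; rw [z20, z20']
    obtain ⟨a11, l11, z11⟩ := hr 1 1 (by norm_num) (by norm_num)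
    obtain ⟨a11', l11', z11'⟩ := hr' 1 1 (by norm_num) (by norm_num)
    have eA11 : A 1 1 = A' 1 1 := by
      rw [a11, a11']; norm_num [eA00, eV00, eA10, eV10, eA01, eV01, eA20, eV20]
    have eV11 : Vv 1 1 = Vv' 1 1 := by
      refine L00_cancel _ _ ?_ ?_
      · rw [l11, l11']
        norm_num [Finset.sum_range_succ, Prod.mk.injEq, eA00, eV00, eA10, eV10, eA01, eV01, eA20, eV20, eA11]
      · rw [Z0_dot] at z11 z11'; rw [z11, z11']
    obtain ⟨a02, l02, z02⟩ := hr 0 2 (by norm_num) (by norm_num)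
    obtain ⟨a02', l02', z02'⟩ := hr' 0 2 (by norm_num) (by norm_num)
    have eA02 : A 0 2 = A' 0 2 := by
      rw [a02, a02']; norm_num [eA00, eV00, eA10, eV10, eA01, eV01, eA20, eV20, eA11, eV11]
    have eV02 : Vv 0 2 = Vv' 0 2 := by
      refine L00_cancel _ _ ?_ ?_
      · rw [l02, l02']
        norm_num [Finset.sum_range_succ, Prod.mk.injEq, eA00, eV00, eA10, eV10, eA01, eV01, eA20, eV20, eA11, eV11, eA02]
      · rw [Z0_dot] at z02 z02'; rw [z02, z02']
    obtain ⟨a30, l30, z30⟩ := hr 3 0 (by norm_num) (by norm_num)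
    obtain ⟨a30', l30', z30'⟩ := hr' 3 0 (by norm_num) (by norm_num)
    have eA30 : A 3 0 = A' 3 0 := by
      rw [a30, a30']; norm_num [eA00, eV00, eA10, eV10, eA01, eV01, eA20, eV20, eA11, eV11, eA02, eV02]
    have eV30 : Vv 3 0 = Vv' 3 0 := by
      refine L00_cancel _ _ ?_ ?_
      · rw [l30, l30']
        norm_num [Finset.sum_range_succ, Prod.mk.injEq, eA00, eV00, eA10, eV10, eA01, eV01, eA20, eV20, eA11, eV11, eA02, eV02, eA30]
      · rw [Z0_dot] at z30 z30'; rw [z30, z30']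
    obtain ⟨a21, l21, z21⟩ := hr 2 1 (by norm_num) (by norm_num)
    obtain ⟨a21', l21', z21'⟩ := hr' 2 1 (by norm_num) (by norm_num)
    have eA21 : A 2 1 = A' 2 1 := by
      rw [a21, a21']; norm_num [eA00, eV00, eA10, eV10, eA01, eV01, eA20, eV20, eA11, eV11, eA02, eV02, eA30, eV30]
    have eV21 : Vv 2 1 = Vv' 2 1 := by
      refine L00_cancel _ _ ?_ ?_
      · rw [l21, l21']
        norm_num [Finset.sum_range_succ, Prod.mk.injEq, eA00, eV00, eA10, eV10, eA01, eV01, eA20, eV20, eA11, eV11, eA02, eV02, eA30, eV30, eA21]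
      · rw [Z0_dot] at z21 z21'; rw [z21, z21']
    obtain ⟨a12, l12, z12⟩ := hr 1 2 (by norm_num) (by norm_num)
    obtain ⟨a12', l12', z12'⟩ := hr' 1 2 (by norm_num) (by norm_num)
    have eA12 : A 1 2 = A' 1 2 := by
      rw [a12, a12']; norm_num [eA00, eV00, eA10, eV10, eA01, eV01, eA20, eV20, eA11, eV11, eA02, eV02, eA30, eV30, eA21, eV21]
    have eV12 : Vv 1 2 = Vv' 1 2 := by
      refine L00_cancel _ _ ?_ ?_
      · rw [l12, l12']
        norm_num [Finset.sum_range_succ, Prod.mk.injEq, eA00, eV00, eA10, eV10, eA01, eV01, eA20, eV20, eA11, eV11, eA02, eV02, eA30, eV30, eA21, eV21, eA12]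
      · rw [Z0_dot] at z12 z12'; rw [z12, z12']
    obtain ⟨a03, l03, z03⟩ := hr 0 3 (by norm_num) (by norm_num)
    obtain ⟨a03', l03', z03'⟩ := hr' 0 3 (by norm_num) (by norm_num)
    have eA03 : A 0 3 = A' 0 3 := by
      rw [a03, a03']; norm_num [eA00, eV00, eA10, eV10, eA01, eV01, eA20, eV20, eA11, eV11, eA02, eV02, eA30, eV30, eA21, eV21, eA12, eV12]
    have eV03 : Vv 0 3 = Vv' 0 3 := by
      refine L00_cancel _ _ ?_ ?_
      · rw [l03, l03']
        norm_num [Finset.sum_range_succ, Prod.mk.injEq, eA00, eV00, eA10, eV10, eA01, eV01, eA20, eV20, eA11, eV11, eA02, eV02, eA30, eV30, eA21, eV21, eA12, eV12, eA03]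
      · rw [Z0_dot] at z03 z03'; rw [z03, z03']
    have hm : m ≤ 3 := by omega
    have hn : n ≤ 3 := by omega
    interval_cases m <;> interval_cases n <;> first
    | omega
    | exact ⟨eA10, eV10⟩
    | exact ⟨eA01, eV01⟩
    | exact ⟨eA20, eV20⟩
    | exact ⟨eA11, eV11⟩
    | exact ⟨eA02, eV02⟩
    | exact ⟨eA30, eV30⟩
    | exact ⟨eA21, eV21⟩
    | exact ⟨eA12, eV12⟩
    | exact ⟨eA03, eV03⟩
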